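/- Let n ≥ 3, and let X = {t, σ(t), σ²(t), ..., σ^{n−1}(t)} and Y = {s, σ(s), ..., σ^{n−1}(s)} be two distinct orbits of size exactly n under the cyclic shift σ of n-tuples. Drawing one tuple uniformly from X and one from Y independently, the probability that their first coordinates differ is at least 2n/(n+1)². -/

import Mathlib

/-- Cyclic shift of an `n`-tuple (the generator of the action of `ℤ/nℤ`). -/
def shift {S : Type*} {n : ℕ} (t : Fin n → S) : Fin n → S :=
  fun i => t ⟨(i.val + 1) % n, Nat.mod_lt _ (by have := i.isLt; omega)⟩

/-- The orbit of an `n`-tuple under the action of `ℤ/nℤ` by cyclic shifts. -/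
def shiftOrbit {S : Type*} {n : ℕ} (t : Fin n → S) : Set (Fin n → S) :=
  {u | ∃ k : ℕ, u = shift^[k] t}

lemma shift_iterate_apply {S : Type*} {n : ℕ} (hn : 0 < n) (t : Fin n → S) (k : ℕ) (i : Fin n) :
    (shift^[k] t) i = t ⟨(i.val + k) % n, Nat.mod_lt _ hn⟩ := by
  induction k generalizing t with
  | zero => simp [Nat.mod_eq_of_lt i.isLt]
  | succ k ih =>
      rw [Function.iterate_succ_apply, ih]
      show t ⟨((i.val + k) % n + 1) % n, _⟩ = t ⟨(i.val + (k+1)) % n, _⟩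
      congr 1
      apply Fin.ext
      show ((i.val + k) % n + 1) % n = (i.val + (k+1)) % n
      rw [Nat.mod_add_mod]
      ring_nf

lemma shift_iterate_n {S : Type*} {n : ℕ} (hn : 0 < n) (t : Fin n → S) :
    shift^[n] t = t := by
  funext i
  rw [shift_iterate_apply hn]
  congr 1
  apply Fin.ext
  show (i.val + n) % n = i.val
  rw [Nat.add_mod_right, Nat.mod_eq_of_lt i.isLt]

lemma shift_iterate_mod {S : Type*} {n : ℕ} (hn : 0 < n) (t : Fin n → S) (k : ℕ) :
    shift^[k] t = shift^[k % n] t := by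
  conv_lhs => rw [← Nat.mod_add_div k n]
  rw [Function.iterate_add_apply]
  congr 1
  induction (k / n) with
  | zero => simp
  | succ q ih =>
      rw [Nat.mul_succ, Function.iterate_add_apply, shift_iterate_n hn, ih]

section KeyCard
open Finset

lemma key_card {S : Type*} {n : ℕ} (hn : 3 ≤ n) (t s : Fin n → S)
    (ht : ∃ i j, t i ≠ t j) (hs : ∃ i j, s i ≠ s j) :
    2 * (n - 1) ≤ {p : Fin n × Fin n | t p.1 ≠ s p.2}.ncard := by
  classical
  have hset : {p : Fin n × Fin n | t p.1 ≠ s p.2}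
      = ↑(univ.filter fun p : Fin n × Fin n => t p.1 ≠ s p.2) := by
    ext p; simp
  rw [hset, Set.ncard_coe_finset]
  set P : Finset (Fin n × Fin n) := univ.filter fun p : Fin n × Fin n => t p.1 ≠ s p.2 with hP
  -- fiberwise sums
  have hsumsnd : P.card = ∑ j : Fin n, (P.filter fun p => p.2 = j).card :=
    card_eq_sum_card_fiberwise (f := Prod.snd) (fun x _ => mem_univ _)
  have hsumfst : P.card = ∑ i : Fin n, (P.filter fun p => p.1 = i).card :=
    card_eq_sum_card_fiberwise (f := Prod.fst) (fun x _ => mem_univ _)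
  by_cases hA : ∀ v : S, 2 ≤ (univ.filter fun i => t i ≠ v).card
  · have h2 : ∀ j : Fin n, 2 ≤ (P.filter fun p => p.2 = j).card := by
      intro j
      obtain ⟨i1, hi1, i2, hi2, hne⟩ := one_lt_card.mp (hA (s j))
      simp only [mem_filter, mem_univ, true_and] at hi1 hi2
      have hsub : {(i1, j), (i2, j)} ⊆ P.filter fun p => p.2 = j := by
        intro p hp
        simp only [mem_insert, mem_singleton] at hp
        rcases hp with rfl | rfl <;> simp [hP, hi1, hi2]
      have := card_le_card hsub
      rwa [card_pair (by simp [hne])] at this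
    calc 2 * (n - 1) ≤ 2 * n := by omega
      _ = ∑ _j : Fin n, 2 := by simp [mul_comm]
      _ ≤ _ := sum_le_sum fun j _ => h2 j
      _ = P.card := hsumsnd.symm
  by_cases hB : ∀ v : S, 2 ≤ (univ.filter fun j => s j ≠ v).card
  · have h2 : ∀ i : Fin n, 2 ≤ (P.filter fun p => p.1 = i).card := by
      intro i
      obtain ⟨j1, hj1, j2, hj2, hne⟩ := one_lt_card.mp (hB (t i))
      simp only [mem_filter, mem_univ, true_and] at hj1 hj2
      have hsub : {(i, j1), (i, j2)} ⊆ P.filter fun p => p.1 = i := by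
        intro p hp
        simp only [mem_insert, mem_singleton] at hp
        rcases hp with rfl | rfl <;> simp [hP, Ne.symm hj1, Ne.symm hj2]
      have := card_le_card hsub
      rwa [card_pair (by simp [hne])] at this
    calc 2 * (n - 1) ≤ 2 * n := by omega
      _ = ∑ _i : Fin n, 2 := by simp [mul_comm]
      _ ≤ _ := sum_le_sum fun i _ => h2 i
      _ = P.card := hsumfst.symm
  push_neg at hA hB
  obtain ⟨a, ha⟩ := hA
  obtain ⟨c, hc⟩ := hB
  -- t has exactly one entry different from a
  have hta : ∃ i0 : Fin n, (univ.filter fun i => t i ≠ a) = {i0} := by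
    apply card_eq_one.mp
    have h1 : (univ.filter fun i => t i ≠ a).card ≤ 1 := by omega
    rcases Nat.eq_zero_or_pos (univ.filter fun i => t i ≠ a).card with h0 | h0
    · exfalso
      obtain ⟨i, j, hij⟩ := ht
      rw [card_eq_zero] at h0
      have hi : t i = a := by
        by_contra h; exact absurd (h0 ▸ mem_filter.mpr ⟨mem_univ i, h⟩) (notMem_empty _)
      have hj : t j = a := by
        by_contra h; exact absurd (h0 ▸ mem_filter.mpr ⟨mem_univ j, h⟩) (notMem_empty _)
      exact hij (hi.trans hj.symm)
    · omega
  have hsc : ∃ j0 : Fin n, (univ.filter fun j => s j ≠ c) = {j0} := by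
    apply card_eq_one.mp
    have h1 : (univ.filter fun j => s j ≠ c).card ≤ 1 := by omega
    rcases Nat.eq_zero_or_pos (univ.filter fun j => s j ≠ c).card with h0 | h0
    · exfalso
      obtain ⟨i, j, hij⟩ := hs
      rw [card_eq_zero] at h0
      have hi : s i = c := by
        by_contra h; exact absurd (h0 ▸ mem_filter.mpr ⟨mem_univ i, h⟩) (notMem_empty _)
      have hj : s j = c := by
        by_contra h; exact absurd (h0 ▸ mem_filter.mpr ⟨mem_univ j, h⟩) (notMem_empty _)
      exact hij (hi.trans hj.symm)
    · omega
  obtain ⟨i0, hi0⟩ := hta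
  obtain ⟨j0, hj0⟩ := hsc
  have hti0 : t i0 ≠ a := by
    have : i0 ∈ univ.filter fun i => t i ≠ a := hi0 ▸ mem_singleton_self i0
    exact (mem_filter.mp this).2
  have htother : ∀ i : Fin n, i ≠ i0 → t i = a := by
    intro i hi
    by_contra h
    have : i ∈ ({i0} : Finset (Fin n)) := hi0 ▸ mem_filter.mpr ⟨mem_univ i, h⟩
    exact hi (mem_singleton.mp this)
  have hsj0 : s j0 ≠ c := by
    have : j0 ∈ univ.filter fun j => s j ≠ c := hj0 ▸ mem_singleton_self j0
    exact (mem_filter.mp this).2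
  have hsother : ∀ j : Fin n, j ≠ j0 → s j = c := by
    intro j hj
    by_contra h
    have : j ∈ ({j0} : Finset (Fin n)) := hj0 ▸ mem_filter.mpr ⟨mem_univ j, h⟩
    exact hj (mem_singleton.mp this)
  by_cases hac : a = c
  · subst hac
    -- {i0} × (univ.erase j0) ∪ (univ.erase i0) × {j0} ⊆ P
    have hsub : ({i0} ×ˢ univ.erase j0) ∪ (univ.erase i0 ×ˢ {j0}) ⊆ P := by
      intro p hp
      rcases mem_union.mp hp with h | h
      · rw [mem_product] at h
        obtain ⟨h1, h2⟩ := h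
        rw [mem_singleton] at h1
        have := hsother p.2 (ne_of_mem_erase h2)
        simp only [hP, mem_filter, mem_univ, true_and]
        rw [h1, this]
        exact hti0
      · rw [mem_product] at h
        obtain ⟨h1, h2⟩ := h
        rw [mem_singleton] at h2
        have := htother p.1 (ne_of_mem_erase h1)
        simp only [hP, mem_filter, mem_univ, true_and]
        rw [h2, this]
        exact fun e => hsj0 e.symm
    have hdisj : Disjoint ({i0} ×ˢ univ.erase j0) (univ.erase i0 ×ˢ {j0}) := by
      rw [disjoint_left]
      intro p h1 h2
      rw [mem_product, mem_singleton] at h1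
      rw [mem_product] at h2
      exact (ne_of_mem_erase h2.1) h1.1
    have hcard := card_le_card hsub
    simp only [card_union_of_disjoint hdisj, card_product, card_singleton,
      card_erase_of_mem (mem_univ _), card_univ, Fintype.card_fin, one_mul, mul_one] at hcard
    omega
  · have hsub : (univ.erase i0 ×ˢ univ.erase j0) ⊆ P := by
      intro p hp
      rw [mem_product] at hp
      have h1 := htother p.1 (ne_of_mem_erase hp.1)
      have h2 := hsother p.2 (ne_of_mem_erase hp.2)
      simp only [hP, mem_filter, mem_univ, true_and]
      rw [h1, h2]
      exact hac
    have hcard := card_le_card hsub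
    rw [card_product, card_erase_of_mem (mem_univ _), card_erase_of_mem (mem_univ _),
      card_univ, Fintype.card_fin] at hcard
    have h2 : 2 * (n-1) ≤ (n-1) * (n-1) := Nat.mul_le_mul_right _ (by omega)
    omega

end KeyCard

/-- Let `n ≥ 3` and let `X`, `Y` be two distinct orbits of `n`-tuples under the
cyclic shift, both of full size exactly `n` (normal cyclasses).  Drawing one tuple
uniformly from `X` and one from `Y` independently, the probability that their first
coordinates differ is at least `2n/(n+1)²`; combinatorially:
`2n·|X|·|Y| ≤ (n+1)²·|{(u,v) ∈ X×Y : u 0 ≠ v 0}|`. -/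
theorem stmt17 {S : Type*} (n : ℕ) (hn : 3 ≤ n) (t s : Fin n → S)
    (hne : shiftOrbit t ≠ shiftOrbit s)
    (hX : (shiftOrbit t).ncard = n) (hY : (shiftOrbit s).ncard = n) :
    2 * n * ((shiftOrbit t).ncard * (shiftOrbit s).ncard) ≤
      (n + 1) ^ 2 * {p : (Fin n → S) × (Fin n → S) |
            p.1 ∈ shiftOrbit t ∧ p.2 ∈ shiftOrbit s ∧
              p.1 ⟨0, by omega⟩ ≠ p.2 ⟨0, by omega⟩}.ncard := by
  classical
  have hn0 : 0 < n := by omega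
  -- the orbit maps
  set g : Fin n → (Fin n → S) := fun k => shift^[k.val] t with hg
  set h : Fin n → (Fin n → S) := fun k => shift^[k.val] s with hh
  have horbt : shiftOrbit t = Set.range g := by
    ext u
    constructor
    · rintro ⟨k, rfl⟩
      exact ⟨⟨k % n, Nat.mod_lt _ hn0⟩, (shift_iterate_mod hn0 t k).symm⟩
    · rintro ⟨k, rfl⟩
      exact ⟨k.val, rfl⟩
  have horbs : shiftOrbit s = Set.range h := by
    ext u
    constructor
    · rintro ⟨k, rfl⟩
      exact ⟨⟨k % n, Nat.mod_lt _ hn0⟩, (shift_iterate_mod hn0 s k).symm⟩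
    · rintro ⟨k, rfl⟩
      exact ⟨k.val, rfl⟩
  -- injectivity of the orbit maps
  have hginj : Function.Injective g := by
    have : (Set.range g).ncard = n := by rw [← horbt]; exact hX
    rw [← Set.image_univ, ← Finset.coe_univ, ← Finset.coe_image,
      Set.ncard_coe_finset] at this
    have := Finset.card_image_iff.mp (by rw [this, Finset.card_univ, Fintype.card_fin])
    rw [Finset.coe_univ] at this
    exact Set.injOn_univ.mp this
  have hhinj : Function.Injective h := by
    have : (Set.range h).ncard = n := by rw [← horbs]; exact hY
    rw [← Set.image_univ, ← Finset.coe_univ, ← Finset.coe_image,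
      Set.ncard_coe_finset] at this
    have := Finset.card_image_iff.mp (by rw [this, Finset.card_univ, Fintype.card_fin])
    rw [Finset.coe_univ] at this
    exact Set.injOn_univ.mp this
  -- non-constancy
  have ht : ∃ i j, t i ≠ t j := by
    by_contra hcon
    push_neg at hcon
    have hst : shift t = t := by
      funext i; exact hcon _ _
    have : shiftOrbit t = {t} := by
      ext u
      constructor
      · rintro ⟨k, rfl⟩
        simp [Function.iterate_fixed hst]
      · rintro rfl
        exact ⟨0, rfl⟩
    rw [this, Set.ncard_singleton] at hX
    omega
  have hs : ∃ i j, s i ≠ s j := by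
    by_contra hcon
    push_neg at hcon
    have hst : shift s = s := by
      funext i; exact hcon _ _
    have : shiftOrbit s = {s} := by
      ext u
      constructor
      · rintro ⟨k, rfl⟩
        simp [Function.iterate_fixed hst]
      · rintro rfl
        exact ⟨0, rfl⟩
    rw [this, Set.ncard_singleton] at hY
    omega
  -- transport the index-pair set into the bad set
  set B : Set ((Fin n → S) × (Fin n → S)) :=
    {p : (Fin n → S) × (Fin n → S) |
      p.1 ∈ shiftOrbit t ∧ p.2 ∈ shiftOrbit s ∧
        p.1 ⟨0, by omega⟩ ≠ p.2 ⟨0, by omega⟩} with hB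
  set Q : Set (Fin n × Fin n) := {p : Fin n × Fin n | t p.1 ≠ s p.2} with hQ
  set F : Fin n × Fin n → (Fin n → S) × (Fin n → S) := fun p => (g p.1, h p.2) with hF
  have hFinj : Function.Injective F := by
    intro p q hpq
    have h1 : g p.1 = g q.1 := congrArg Prod.fst hpq
    have h2 : h p.2 = h q.2 := congrArg Prod.snd hpq
    exact Prod.ext (hginj h1) (hhinj h2)
  have hg0 : ∀ k : Fin n, g k ⟨0, by omega⟩ = t k := by
    intro k
    show shift^[k.val] t ⟨0, hn0⟩ = t k
    rw [shift_iterate_apply hn0]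
    congr 1
    apply Fin.ext
    show (0 + k.val) % n = k.val
    rw [Nat.zero_add, Nat.mod_eq_of_lt k.isLt]
  have hh0 : ∀ k : Fin n, h k ⟨0, by omega⟩ = s k := by
    intro k
    show shift^[k.val] s ⟨0, hn0⟩ = s k
    rw [shift_iterate_apply hn0]
    congr 1
    apply Fin.ext
    show (0 + k.val) % n = k.val
    rw [Nat.zero_add, Nat.mod_eq_of_lt k.isLt]
  have hsub : F '' Q ⊆ B := by
    rintro _ ⟨p, hp, rfl⟩
    refine ⟨⟨p.1.val, rfl⟩, ⟨p.2.val, rfl⟩, ?_⟩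
    show g p.1 ⟨0, by omega⟩ ≠ h p.2 ⟨0, by omega⟩
    rw [hg0, hh0]
    exact hp
  have hBfin : B.Finite := by
    apply Set.Finite.subset (Set.Finite.prod (Set.finite_range g) (Set.finite_range h))
    intro p hp
    exact ⟨horbt ▸ hp.1, horbs ▸ hp.2.1⟩
  have hQcard : (F '' Q).ncard = Q.ncard := Set.ncard_image_of_injective Q hFinj
  have hle : Q.ncard ≤ B.ncard := by
    rw [← hQcard]
    exact Set.ncard_le_ncard hsub hBfin
  have hkey := key_card hn t s ht hs
  rw [hX, hY]
  have hfin : 2 * (n - 1) ≤ B.ncard := le_trans hkey hle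
  obtain ⟨m, rfl⟩ : ∃ m, n = m + 3 := ⟨n - 3, by omega⟩
  have h1 : 2 * (m + 2) ≤ B.ncard := by omega
  nlinarith [h1, sq_nonneg (m : ℤ)]
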